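/- Let x_j : ℝ → ℝ³ be a continuous, globally bounded, strictly sub-luminal trajectory. Then for every (t, x) ∈ ℝ × ℝ³ there exists exactly one advanced light-cone time, i.e. a unique t⁺ ∈ ℝ satisfying t⁺ = t + ‖x − x_j(t⁺)‖, and exactly one retarded light-cone time, i.e. a unique t⁻ ∈ ℝ satisfying t⁻ = t − ‖x − x_j(t⁻)‖. -/
import Mathlib


/-- For a continuous, globally bounded, strictly sub-luminal trajectory
`xj : ℝ → ℝ³`, every spacetime point `(t, x)` has a unique advanced light-cone time
and a unique retarded light-cone time. -/
theorem stmt_0 (xj : ℝ → EuclideanSpace ℝ (Fin 3))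
    (hcont : Continuous xj)
    (hbdd : Bornology.IsBounded (Set.range xj))
    (hsub : ∀ a b : ℝ, a ≠ b → ‖xj a - xj b‖ < |a - b|)
    (t : ℝ) (x : EuclideanSpace ℝ (Fin 3)) :
    (∃! tp : ℝ, tp = t + ‖x - xj tp‖) ∧ (∃! tm : ℝ, tm = t - ‖x - xj tm‖) := by
  obtain ⟨M, hM⟩ := isBounded_iff_forall_norm_le.1 hbdd
  have hMx : ∀ s : ℝ, ‖x - xj s‖ ≤ ‖x‖ + M := by
    intro s
    calc ‖x - xj s‖ ≤ ‖x‖ + ‖xj s‖ := norm_sub_le _ _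
    _ ≤ ‖x‖ + M := by
        have := hM (xj s) (Set.mem_range_self s)
        linarith
  have key : ∀ s₁ s₂ : ℝ, s₁ ≠ s₂ → |‖x - xj s₁‖ - ‖x - xj s₂‖| < |s₁ - s₂| := by
    intro s₁ s₂ hne
    calc |‖x - xj s₁‖ - ‖x - xj s₂‖| ≤ ‖(x - xj s₁) - (x - xj s₂)‖ :=
          abs_norm_sub_norm_le _ _
    _ = ‖xj s₂ - xj s₁‖ := by rw [sub_sub_sub_cancel_left]
    _ < |s₂ - s₁| := hsub s₂ s₁ (Ne.symm hne)
    _ = |s₁ - s₂| := abs_sub_comm _ _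
  constructor
  · -- advanced
    have hfc : Continuous (fun s : ℝ => s - (t + ‖x - xj s‖)) := by
      continuity
    have hb : ∀ s ∈ Set.Icc t (t + ‖x‖ + M + 1), True := fun _ _ => trivial
    have h1 : t ≤ t + ‖x‖ + M + 1 := by
      have := hM (xj 0) (Set.mem_range_self 0)
      have := norm_nonneg x
      have := norm_nonneg (xj 0)
      linarith
    have := intermediate_value_Icc h1 (hfc.continuousOn)
    have hmem : (0 : ℝ) ∈ Set.Icc (t - (t + ‖x - xj t‖))
        ((t + ‖x‖ + M + 1) - (t + ‖x - xj (t + ‖x‖ + M + 1)‖)) := by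
      constructor
      · have := norm_nonneg (x - xj t); linarith
      · have := hMx (t + ‖x‖ + M + 1); linarith
    obtain ⟨tp, _, htp⟩ := this hmem
    refine ⟨tp, by linarith [sub_eq_zero.mp htp], ?_⟩
    intro y hy
    by_contra hne
    have h2 := key y tp hne
    have htp' : tp = t + ‖x - xj tp‖ := by linarith [sub_eq_zero.mp htp]
    have heq : ‖x - xj y‖ - ‖x - xj tp‖ = y - tp := by linarith
    rw [heq] at h2
    exact lt_irrefl _ h2
  · -- retarded
    have hfc : Continuous (fun s : ℝ => s - (t - ‖x - xj s‖)) := by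
      continuity
    have h1 : t - ‖x‖ - M - 1 ≤ t := by
      have := hM (xj 0) (Set.mem_range_self 0)
      have := norm_nonneg x
      have := norm_nonneg (xj 0)
      linarith
    have := intermediate_value_Icc h1 (hfc.continuousOn)
    have hmem : (0 : ℝ) ∈ Set.Icc ((t - ‖x‖ - M - 1) - (t - ‖x - xj (t - ‖x‖ - M - 1)‖))
        (t - (t - ‖x - xj t‖)) := by
      constructor
      · have := hMx (t - ‖x‖ - M - 1); linarith
      · have := norm_nonneg (x - xj t); linarith
    obtain ⟨tm, _, htm⟩ := this hmem
    refine ⟨tm, by linarith [sub_eq_zero.mp htm], ?_⟩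
    intro y hy
    by_contra hne
    have h2 := key y tm hne
    have htm' : tm = t - ‖x - xj tm‖ := by linarith [sub_eq_zero.mp htm]
    have heq : ‖x - xj y‖ - ‖x - xj tm‖ = -(y - tm) := by linarith
    rw [heq, abs_neg] at h2
    exact lt_irrefl _ h2
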